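/- Let X : [0,T] → ℝ be continuous of bounded variation and let Y : [0,T] → ℝ be bounded with at most countably many discontinuities. Then ∫₀ᵗ Y d⁻X exists for every t and equals the Lebesgue–Stieltjes integral ∫₀ᵗ Y dX. -/

import Mathlib

open MeasureTheory Filter Set

/-- `f` is extended constantly outside `[0,T]`. -/
def ExtConst (T : ℝ) (f : ℝ → ℝ) : Prop :=
  (∀ t ≤ (0:ℝ), f t = f 0) ∧ ∀ t, T ≤ t → f t = f T

/-- The `ε`-forward integral `I⁻(ε,Y,dX)(t)`. -/
noncomputable def Iminus (ε : ℝ) (Y X : ℝ → ℝ) (t : ℝ) : ℝ :=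
  ∫ s in (0:ℝ)..t, Y s * (X (s + ε) - X s) / ε

open ENNReal

/-- A function continuous off a countable set is measurable. -/
lemma measurable_of_countable_discont {Y : ℝ → ℝ} {D : Set ℝ} (hD : D.Countable)
    (hYcont : ∀ s ∉ D, ContinuousAt Y s) : Measurable Y := by
  apply measurable_of_isOpen
  intro O hO
  have h : Y ⁻¹' O = interior (Y ⁻¹' O) ∪ (Y ⁻¹' O ∩ D) := by
    apply Subset.antisymm
    · intro x hx
      by_cases hxD : x ∈ D
      · exact Or.inr ⟨hx, hxD⟩
      · exact Or.inl (mem_interior_iff_mem_nhds.2 ((hYcont x hxD) (hO.mem_nhds hx)))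
    · exact union_subset interior_subset inter_subset_left
  rw [h]
  exact isOpen_interior.measurableSet.union (hD.mono inter_subset_right).measurableSet

/-- A bounded measurable function is integrable on finite-measure sets. -/
lemma integrableOn_of_bdd {Y : ℝ → ℝ} (hYm : Measurable Y) {MY : ℝ}
    (hYb : ∀ s, |Y s| ≤ MY) {s : Set ℝ} (hs : MeasurableSet s) (hμ : volume s < ∞) :
    IntegrableOn Y s := by
  refine Integrable.mono' ((integrableOn_const (C:=MY) hμ.ne)) hYm.aestronglyMeasurable ?_
  exact Eventually.of_forall fun x => hYb x

lemma indicator_prod_eq (Y : ℝ → ℝ) (t ε : ℝ) (s u : ℝ) :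
    (Ioc 0 t).indicator Y s * (Ioc s (s + ε)).indicator (fun _ => (1:ℝ)) u =
    (Ioc 0 t ∩ Ico (u - ε) u).indicator Y s := by
  have hiff : u ∈ Ioc s (s + ε) ↔ s ∈ Ico (u - ε) u := by
    constructor <;> (intro h; exact ⟨by linarith [h.1, h.2], by linarith [h.1, h.2]⟩)
  by_cases h1 : s ∈ Ioc 0 t
  · by_cases h2 : s ∈ Ico (u - ε) u
    · rw [Set.indicator_of_mem h1, Set.indicator_of_mem (hiff.2 h2),
        Set.indicator_of_mem (mem_inter h1 h2)]
      ring
    · rw [Set.indicator_of_notMem (fun hc : u ∈ Ioc s (s + ε) => h2 (hiff.1 hc)),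
        Set.indicator_of_notMem (fun hc : s ∈ Ioc 0 t ∩ Ico (u - ε) u => h2 hc.2)]
      ring
  · rw [Set.indicator_of_notMem h1,
      Set.indicator_of_notMem (fun hc : s ∈ Ioc 0 t ∩ Ico (u - ε) u => h1 hc.1)]
    ring

lemma fubini_step (F : StieltjesFunction ℝ) (Y : ℝ → ℝ) (hYm : Measurable Y)
    {MY : ℝ} (hYb : ∀ s, |Y s| ≤ MY) {t ε : ℝ} (ht : 0 ≤ t) (hε : 0 < ε) :
    ∫ s in Set.Ioc 0 t, Y s * (F (s + ε) - F s) =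
      ∫ u, ∫ s in Set.Ioc 0 t ∩ Set.Ico (u - ε) u, Y s ∂volume ∂F.measure := by
  have hMY : 0 ≤ MY := le_trans (abs_nonneg _) (hYb 0)
  set μ := F.measure with hμdef
  set H : ℝ → ℝ → ℝ := fun s u =>
    (Ioc 0 t).indicator Y s * (Ioc s (s + ε)).indicator (fun _ => (1:ℝ)) u with hHdef
  -- measurability of uncurried H
  have hSmeas : MeasurableSet {p : ℝ × ℝ | p.1 < p.2 ∧ p.2 ≤ p.1 + ε} :=
    (measurableSet_lt measurable_fst measurable_snd).inter
      (measurableSet_le measurable_snd (measurable_fst.add_const ε))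
  have hHuncurry : ∀ p : ℝ × ℝ, Function.uncurry H p =
      (Ioc 0 t).indicator Y p.1 *
        ({q : ℝ × ℝ | q.1 < q.2 ∧ q.2 ≤ q.1 + ε}).indicator (fun _ => (1:ℝ)) p := by
    rintro ⟨s, u⟩
    simp only [Function.uncurry, hHdef]
    simp [Set.indicator_apply]
  have hHm : Measurable (Function.uncurry H) := by
    rw [show Function.uncurry H = fun p : ℝ × ℝ => (Ioc 0 t).indicator Y p.1 *
        ({q : ℝ × ℝ | q.1 < q.2 ∧ q.2 ≤ q.1 + ε}).indicator (fun _ => (1:ℝ)) p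
      from funext hHuncurry]
    exact ((hYm.indicator measurableSet_Ioc).comp measurable_fst).mul
      (measurable_const.indicator hSmeas)
  have hprodset : MeasurableSet ((Ioc (0:ℝ) t) ×ˢ (Ioc (0:ℝ) (t+ε))) :=
    measurableSet_Ioc.prod measurableSet_Ioc
  have hfin : (volume.prod μ) ((Ioc (0:ℝ) t) ×ˢ (Ioc (0:ℝ) (t+ε))) < ∞ := by
    rw [Measure.prod_prod]
    exact ENNReal.mul_lt_top (by rw [Real.volume_Ioc]; exact ENNReal.ofReal_lt_top)
      (by rw [hμdef, F.measure_Ioc]; exact ENNReal.ofReal_lt_top)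
  have hHint : Integrable (Function.uncurry H) (volume.prod μ) := by
    refine Integrable.mono' ((integrable_indicator_iff hprodset).2
      (integrableOn_const (C := MY) hfin.ne)) hHm.aestronglyMeasurable ?_
    refine Eventually.of_forall ?_
    rintro ⟨s, u⟩
    by_cases hp : (s, u) ∈ (Ioc (0:ℝ) t) ×ˢ (Ioc (0:ℝ) (t+ε))
    · rw [Set.indicator_of_mem hp]
      have h1 : |(Ioc 0 t).indicator Y s| ≤ MY := by
        by_cases h : s ∈ Ioc 0 t
        · rw [Set.indicator_of_mem h]; exact hYb s
        · rw [Set.indicator_of_notMem h]; simpa using hMY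
      have h2 : |(Ioc s (s+ε)).indicator (fun _ => (1:ℝ)) u| ≤ 1 := by
        by_cases h : u ∈ Ioc s (s+ε) <;> simp [h]
      calc ‖Function.uncurry H (s, u)‖
          = |(Ioc 0 t).indicator Y s| * |(Ioc s (s+ε)).indicator (fun _ => (1:ℝ)) u| := by
            simp [Function.uncurry, hHdef, abs_mul]
        _ ≤ MY * 1 := mul_le_mul h1 h2 (abs_nonneg _) hMY
        _ = MY := mul_one _
    · rw [Set.indicator_of_notMem hp]
      have hz : Function.uncurry H (s, u) = 0 := by
        simp only [Function.uncurry, hHdef]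
        by_cases h1 : s ∈ Ioc 0 t
        · by_cases h2 : u ∈ Ioc s (s+ε)
          · exact absurd (Set.mk_mem_prod h1
              (show u ∈ Ioc (0:ℝ) (t+ε) from
                ⟨lt_trans h1.1 h2.1, le_trans h2.2 (by linarith [h1.2])⟩)) hp
          · rw [Set.indicator_of_notMem h2]; ring
        · rw [Set.indicator_of_notMem h1]; ring
      rw [hz]; simp
  have hswap := integral_integral_swap hHint
  have hinner1 : ∀ s, ∫ u, H s u ∂μ =
      (Ioc 0 t).indicator (fun s => Y s * (F (s + ε) - F s)) s := by
    intro s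
    have h1 : ∫ u, H s u ∂μ =
        (Ioc 0 t).indicator Y s * ∫ u, (Ioc s (s+ε)).indicator (fun _ => (1:ℝ)) u ∂μ := by
      rw [← integral_const_mul]
    have h2 : ∫ u, (Ioc s (s+ε)).indicator (fun _ => (1:ℝ)) u ∂μ = F (s + ε) - F s := by
      rw [integral_indicator_const _ measurableSet_Ioc, measureReal_def, hμdef, F.measure_Ioc,
        ENNReal.toReal_ofReal (sub_nonneg.2 (F.mono (by linarith)))]
      simp
    rw [h1, h2]
    by_cases h : s ∈ Ioc 0 t
    · rw [Set.indicator_of_mem h, Set.indicator_of_mem h]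
    · rw [Set.indicator_of_notMem h, Set.indicator_of_notMem h]; ring
  calc ∫ s in Set.Ioc 0 t, Y s * (F (s + ε) - F s)
      = ∫ s, (Ioc 0 t).indicator (fun s => Y s * (F (s + ε) - F s)) s :=
        (integral_indicator measurableSet_Ioc).symm
    _ = ∫ s, ∫ u, H s u ∂μ := integral_congr_ae
        (Eventually.of_forall fun s => (hinner1 s).symm)
    _ = ∫ u, ∫ s, H s u ∂volume ∂μ := hswap
    _ = ∫ u, ∫ s in Set.Ioc 0 t ∩ Set.Ico (u - ε) u, Y s ∂volume ∂μ := by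
        refine integral_congr_ae (Eventually.of_forall fun u => ?_)
        dsimp only
        rw [← integral_indicator (measurableSet_Ioc.inter measurableSet_Ico)]
        exact integral_congr_ae (Eventually.of_forall fun s => indicator_prod_eq Y t ε s u)

lemma key_tendsto (F : StieltjesFunction ℝ) (hFc : Continuous F) (Y : ℝ → ℝ) (hYm : Measurable Y)
    {MY : ℝ} (hYb : ∀ s, |Y s| ≤ MY)
    {D : Set ℝ} (hD : D.Countable) (hYcont : ∀ s ∉ D, ContinuousAt Y s)
    {t : ℝ} (ht : 0 ≤ t) :
    Tendsto (fun ε => (∫ s in Set.Ioc 0 t, Y s * (F (s + ε) - F s)) / ε)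
      (nhdsWithin 0 (Set.Ioi 0))
      (nhds (∫ s in Set.Ioc 0 t, Y s ∂F.measure)) := by
  have hMY : 0 ≤ MY := le_trans (abs_nonneg _) (hYb 0)
  set μ := F.measure with hμdef
  haveI : NullSingletonClass μ := by
    constructor
    intro a
    rw [hμdef, F.measure_singleton]
    have hll : Function.leftLim (F : ℝ → ℝ) a = F a :=
      leftLim_eq_of_tendsto
        ((hFc.tendsto a).mono_left nhdsWithin_le_nhds)
    rw [hll, sub_self, ENNReal.ofReal_zero]
  have hlim : Tendsto (fun ε => ∫ u, (∫ s in Ioc 0 t ∩ Ico (u - ε) u, Y s) / ε ∂μ)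
      (nhdsWithin 0 (Set.Ioi 0)) (nhds (∫ u, (Ioc 0 t).indicator Y u ∂μ)) := by
    apply tendsto_integral_filter_of_dominated_convergence
      ((Ioc 0 (t+1)).indicator (fun _ => MY))
    -- measurability
    · refine Eventually.of_forall fun ε => ?_
      have hTset : MeasurableSet {q : ℝ × ℝ | q.1 - ε ≤ q.2 ∧ q.2 < q.1} :=
        (measurableSet_le (measurable_fst.sub measurable_const) measurable_snd).inter
          (measurableSet_lt measurable_snd measurable_fst)
      have hk : StronglyMeasurable fun p : ℝ × ℝ =>
          (Ioc 0 t).indicator Y p.2 *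
            ({q : ℝ × ℝ | q.1 - ε ≤ q.2 ∧ q.2 < q.1}).indicator (fun _ => (1:ℝ)) p :=
        (((hYm.indicator measurableSet_Ioc).comp measurable_snd).mul
          (measurable_const.indicator hTset)).stronglyMeasurable
      have hmeas := MeasureTheory.StronglyMeasurable.integral_prod_right' (ν := (volume : Measure ℝ)) hk
      have hfun : (fun u => (∫ s in Ioc 0 t ∩ Ico (u - ε) u, Y s) / ε) =
          fun u => (∫ s, (Ioc 0 t).indicator Y s *
            ({q : ℝ × ℝ | q.1 - ε ≤ q.2 ∧ q.2 < q.1}).indicator (fun _ => (1:ℝ)) (u, s)) / ε := by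
        funext u
        congr 1
        rw [← integral_indicator (measurableSet_Ioc.inter measurableSet_Ico)]
        refine integral_congr_ae (Eventually.of_forall fun s => ?_)
        have h2 : ({q : ℝ × ℝ | q.1 - ε ≤ q.2 ∧ q.2 < q.1}).indicator (fun _ => (1:ℝ)) (u, s)
            = (Ico (u - ε) u).indicator (fun _ => (1:ℝ)) s := by
          simp [Set.indicator_apply, Set.mem_Ico, sub_le_iff_le_add]
        dsimp only
        rw [h2, ← inter_indicator_mul]
        simp [Set.indicator_apply]
      rw [hfun]
      simp only [div_eq_mul_inv]
      exact (hmeas.mul_const ε⁻¹).aestronglyMeasurable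
    -- bound
    · filter_upwards [Ioo_mem_nhdsGT zero_lt_one] with ε hε
      refine Eventually.of_forall fun u => ?_
      by_cases hu : u ∈ Ioc 0 (t+1)
      · rw [Set.indicator_of_mem hu]
        have hvol : volume (Ioc 0 t ∩ Ico (u - ε) u) ≤ ENNReal.ofReal ε := by
          calc volume (Ioc 0 t ∩ Ico (u - ε) u) ≤ volume (Ico (u - ε) u) :=
                measure_mono inter_subset_right
            _ = ENNReal.ofReal ε := by rw [Real.volume_Ico]; ring_nf
        have hfinvol : volume (Ioc 0 t ∩ Ico (u - ε) u) < ∞ :=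
          lt_of_le_of_lt hvol ENNReal.ofReal_lt_top
        have hint : ‖∫ s in Ioc 0 t ∩ Ico (u - ε) u, Y s‖ ≤ MY * ε := by
          refine le_trans (norm_setIntegral_le_of_norm_le_const hfinvol
            (fun x _ => by simpa using hYb x)) ?_
          have htr : (volume (Ioc 0 t ∩ Ico (u - ε) u)).toReal ≤ ε :=
            ENNReal.toReal_le_of_le_ofReal hε.1.le hvol
          exact mul_le_mul_of_nonneg_left htr hMY
        rw [norm_div, Real.norm_eq_abs ε, abs_of_pos hε.1, div_le_iff₀ hε.1]
        exact hint
      · rw [Set.indicator_of_notMem hu]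
        have hempty : Ioc 0 t ∩ Ico (u - ε) u = ∅ := by
          ext s
          simp only [mem_inter_iff, mem_Ioc, mem_Ico, mem_empty_iff_false, iff_false, not_and]
          rintro ⟨hs1, hs2⟩ hs3
          by_cases h : 0 < u
          · have hut : t + 1 < u := by
              by_contra hh; push_neg at hh; exact hu ⟨h, hh⟩
            linarith [hε.2]
          · push_neg at h; linarith
        rw [hempty]
        simp
    -- integrable bound
    · rw [integrable_indicator_iff measurableSet_Ioc]
      exact integrableOn_const (ne_of_lt (by
        rw [hμdef, F.measure_Ioc]; exact ENNReal.ofReal_lt_top))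
    -- pointwise limit
    · have hN : μ (D ∪ {t}) = 0 :=
        measure_union_null (hD.measure_zero μ) (measure_singleton t)
      filter_upwards [measure_eq_zero_iff_ae_notMem.mp hN] with u hu
      have hu1 : u ∉ D := fun h => hu (Or.inl h)
      have hu2 : u ≠ t := fun h => hu (Or.inr h)
      rcases le_or_gt u 0 with h0 | h0
      · rw [Set.indicator_of_notMem (fun hc : u ∈ Ioc 0 t => absurd hc.1 (not_lt.2 h0))]
        refine Tendsto.congr' ?_ tendsto_const_nhds
        filter_upwards [self_mem_nhdsWithin] with ε (hε : ε ∈ Ioi (0:ℝ))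
        have hempty : Ioc 0 t ∩ Ico (u - ε) u = ∅ := by
          ext s
          simp only [mem_inter_iff, mem_Ioc, mem_Ico, mem_empty_iff_false, iff_false, not_and]
          rintro ⟨hs1, hs2⟩ hs3
          linarith
        rw [hempty]
        simp
      · rcases lt_or_ge t u with h1 | h1
        · rw [Set.indicator_of_notMem (fun hc : u ∈ Ioc 0 t => absurd hc.2 (not_le.2 h1))]
          refine Tendsto.congr' ?_ tendsto_const_nhds
          filter_upwards [Ioo_mem_nhdsGT (sub_pos.2 h1)] with ε hε
          have hempty : Ioc 0 t ∩ Ico (u - ε) u = ∅ := by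
            ext s
            simp only [mem_inter_iff, mem_Ioc, mem_Ico, mem_empty_iff_false, iff_false, not_and]
            rintro ⟨hs1, hs2⟩ hs3
            have := hε.2
            linarith
          rw [hempty]
          simp
        · have h1' : u < t := lt_of_le_of_ne h1 hu2
          have humem : u ∈ Ioc 0 t := ⟨h0, h1⟩
          rw [Set.indicator_of_mem humem]
          rw [Metric.tendsto_nhds]
          intro δ hδ
          obtain ⟨η, hη, hcont⟩ := Metric.continuousAt_iff.1 (hYcont u hu1) (δ/2) (half_pos hδ)
          filter_upwards [Ioo_mem_nhdsGT (lt_min h0 hη)] with ε hε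
          have hεpos : (0:ℝ) < ε := hε.1
          have hεu : ε < u := lt_of_lt_of_le hε.2 (min_le_left _ _)
          have hεη : ε < η := lt_of_lt_of_le hε.2 (min_le_right _ _)
          have hset : Ioc 0 t ∩ Ico (u - ε) u = Ico (u - ε) u :=
            inter_eq_self_of_subset_right (fun s hs =>
              ⟨by linarith [hs.1], by linarith [hs.2]⟩)
          have hvol : volume (Ico (u - ε) u) = ENNReal.ofReal ε := by
            rw [Real.volume_Ico]; ring_nf
          have hvolfin : volume (Ico (u - ε) u) < ∞ := by
            rw [hvol]; exact ENNReal.ofReal_lt_top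
          have hconst : ∫ _ in Ico (u - ε) u, Y u = ε * Y u := by
            rw [setIntegral_const, measureReal_def, hvol, ENNReal.toReal_ofReal hεpos.le, smul_eq_mul]
          have hYint : IntegrableOn Y (Ico (u - ε) u) :=
            integrableOn_of_bdd hYm hYb measurableSet_Ico hvolfin
          have hdiff : (∫ s in Ioc 0 t ∩ Ico (u - ε) u, Y s) / ε - Y u
              = (∫ s in Ico (u - ε) u, (Y s - Y u)) / ε := by
            rw [hset, integral_sub hYint (integrableOn_const hvolfin.ne), hconst]
            field_simp
          rw [Real.dist_eq, hdiff, abs_div, abs_of_pos hεpos, div_lt_iff₀ hεpos]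
          have hb : |∫ s in Ico (u - ε) u, (Y s - Y u)| ≤ (δ/2) * ε := by
            have hbd : ∀ s ∈ Ico (u - ε) u, ‖Y s - Y u‖ ≤ δ/2 := by
              intro s hs
              have hds : dist s u < η := by
                rw [Real.dist_eq, abs_of_nonpos (by linarith [hs.2])]
                linarith [hs.1]
              have := hcont hds
              rw [Real.dist_eq] at this
              exact le_of_lt (by simpa [Real.norm_eq_abs] using this)
            have := norm_setIntegral_le_of_norm_le_const hvolfin hbd
            rw [measureReal_def, hvol, ENNReal.toReal_ofReal hεpos.le] at this
            simpa [Real.norm_eq_abs] using this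
          refine lt_of_le_of_lt hb ?_
          exact mul_lt_mul_of_pos_right (half_lt_self hδ) hεpos
  rw [integral_indicator measurableSet_Ioc] at hlim
  refine Tendsto.congr' ?_ hlim
  filter_upwards [self_mem_nhdsWithin] with ε (hε : ε ∈ Ioi (0:ℝ))
  rw [integral_div]
  congr 1
  exact (fubini_step F Y hYm hYb ht hε).symm

lemma integrableOn_bdd_mul_cont {Y : ℝ → ℝ} (hYm : Measurable Y) {MY : ℝ}
    (hYb : ∀ s, |Y s| ≤ MY) (c : ℝ → ℝ) (hc : Continuous c) (a b : ℝ) :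
    IntegrableOn (fun s => Y s * c s) (Set.Ioc a b) := by
  obtain ⟨C, hC⟩ := (isCompact_Icc (a := a) (b := b)).exists_bound_of_continuousOn
    hc.continuousOn
  have hMY : 0 ≤ MY := le_trans (abs_nonneg _) (hYb 0)
  refine Integrable.mono' (integrableOn_const (C := MY * C) (ne_of_lt ?_))
    (hYm.mul hc.measurable).aestronglyMeasurable ?_
  · rw [Real.volume_Ioc]; exact ENNReal.ofReal_lt_top
  · filter_upwards [ae_restrict_mem measurableSet_Ioc] with s hs
    have h2 : |c s| ≤ C := hC s (Ioc_subset_Icc_self hs)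
    rw [Real.norm_eq_abs, abs_mul]
    exact mul_le_mul (hYb s) h2 (abs_nonneg _) hMY

theorem stmt7' (T : ℝ) (hT : 0 < T) (F G : StieltjesFunction ℝ) (X Y : ℝ → ℝ)
    (hFc : Continuous F) (hGc : Continuous G)
    (hXFG : ∀ t, X t = F t - G t)
    (MY : ℝ) (hYb : ∀ t, |Y t| ≤ MY)
    (D : Set ℝ) (hD : D.Countable) (hYcont : ∀ s ∉ D, ContinuousAt Y s) :
    ∀ t ∈ Set.Icc (0:ℝ) T,
      Tendsto (fun ε => ∫ s in (0:ℝ)..t, Y s * (X (s + ε) - X s) / ε)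
        (nhdsWithin 0 (Set.Ioi 0))
        (nhds ((∫ s in Set.Ioc (0:ℝ) t, Y s ∂F.measure) -
               ∫ s in Set.Ioc (0:ℝ) t, Y s ∂G.measure)) := by
  intro t ht
  obtain ⟨ht0, htT⟩ := ht
  have hYm : Measurable Y := measurable_of_countable_discont hD hYcont
  have hF := key_tendsto F hFc Y hYm hYb hD hYcont ht0
  have hG := key_tendsto G hGc Y hYm hYb hD hYcont ht0
  refine Tendsto.congr' ?_ (hF.sub hG)
  filter_upwards [self_mem_nhdsWithin] with ε (hε : ε ∈ Ioi (0:ℝ))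
  have hεpos : (0:ℝ) < ε := hε
  have hFi : IntegrableOn (fun s => Y s * (F (s + ε) - F s)) (Set.Ioc 0 t) volume :=
    integrableOn_bdd_mul_cont hYm hYb _
      ((hFc.comp (continuous_id.add continuous_const)).sub hFc) 0 t
  have hGi : IntegrableOn (fun s => Y s * (G (s + ε) - G s)) (Set.Ioc 0 t) volume :=
    integrableOn_bdd_mul_cont hYm hYb _
      ((hGc.comp (continuous_id.add continuous_const)).sub hGc) 0 t
  calc (∫ s in Set.Ioc 0 t, Y s * (F (s + ε) - F s)) / ε -
        (∫ s in Set.Ioc 0 t, Y s * (G (s + ε) - G s)) / ε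
      = (∫ s in Set.Ioc 0 t, Y s * (F (s + ε) - F s) / ε) -
        (∫ s in Set.Ioc 0 t, Y s * (G (s + ε) - G s) / ε) := by
        rw [integral_div, integral_div]
    _ = ∫ s in Set.Ioc 0 t,
          (Y s * (F (s + ε) - F s) / ε - Y s * (G (s + ε) - G s) / ε) :=
        (integral_sub (hFi.div_const ε) (hGi.div_const ε)).symm
    _ = ∫ s in Set.Ioc 0 t, Y s * (X (s + ε) - X s) / ε := by
        refine integral_congr_ae (Eventually.of_forall fun s => ?_)
        dsimp only
        rw [hXFG (s + ε), hXFG s]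
        ring
    _ = ∫ s in (0:ℝ)..t, Y s * (X (s + ε) - X s) / ε :=
        (intervalIntegral.integral_of_le ht0).symm


/-- if `X` is continuous of bounded variation (written as the difference
`F − G` of two continuous Stieltjes functions) and `Y` is bounded with at most countably
many discontinuities, then `∫₀ᵗ Y d⁻X` exists and equals the Lebesgue–Stieltjes
integral `∫₀ᵗ Y dX = ∫_{(0,t]} Y dF − ∫_{(0,t]} Y dG`. -/
theorem stmt7 (T : ℝ) (hT : 0 < T) (F G : StieltjesFunction ℝ) (X Y : ℝ → ℝ)
    (hFc : Continuous F) (hGc : Continuous G)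
    (hXFG : ∀ t, X t = F t - G t)
    (hXe : ExtConst T X) (hYe : ExtConst T Y)
    (MY : ℝ) (hYb : ∀ t, |Y t| ≤ MY)
    (D : Set ℝ) (hD : D.Countable) (hYcont : ∀ s ∉ D, ContinuousAt Y s) :
    ∀ t ∈ Set.Icc (0:ℝ) T,
      Tendsto (fun ε => Iminus ε Y X t) (nhdsWithin 0 (Set.Ioi 0))
        (nhds ((∫ s in Set.Ioc (0:ℝ) t, Y s ∂F.measure) -
               ∫ s in Set.Ioc (0:ℝ) t, Y s ∂G.measure)) := by
  intro t ht
  exact stmt7' T hT F G X Y hFc hGc hXFG MY hYb D hD hYcont t ht
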